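/- arXiv:1709.03294 — 4 statements merged into one kernel-verified Lean document; each statement's English description precedes it below -/
import Mathlib

section
/- Let f(x) = a + b·x^β + c·x^γ be a polynomial with integer coefficients a, b, c and natural number exponents 1 ≤ β < γ satisfying γ ≥ 2β. If m > 0 is a real number with f′(m) = 0, then sup_{x ∈ [0, m]} |f′(x)| ≤ b²·β. -/
/-- Lemma 7 of the paper: bound on the derivative of a trinomial on `[0, m]`
where `m` is a positive critical point, under the assumption `γ ≥ 2β`. -/
theorem trinomial_derivative_sup_bound (a b c : ℤ) (β γ : ℕ)
    (hβ : 1 ≤ β) (hβγ : β < γ) (hγ2β : 2 * β ≤ γ)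
    (f : ℝ → ℝ)
    (hf : f = fun x => (a : ℝ) + (b : ℝ) * x ^ β + (c : ℝ) * x ^ γ)
    (m : ℝ) (hm : 0 < m) (hm' : deriv f m = 0) :
    sSup ((fun x => |deriv f x|) '' Set.Icc 0 m) ≤ (b : ℝ) ^ 2 * (β : ℝ) := by
  obtain ⟨p, rfl⟩ : ∃ p, β = p + 1 := ⟨β - 1, by omega⟩
  obtain ⟨r, rfl⟩ : ∃ r, γ = (p + 1) + r := ⟨γ - (p + 1), by omega⟩
  set β := p + 1 with hβdef
  set γ := β + r with hγdef
  have hrβ : β ≤ r := by omega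
  have hderiv : ∀ x : ℝ, deriv f x = (b : ℝ) * (β * x ^ p) + (c : ℝ) * (γ * x ^ (p + r)) := by
    intro x
    rw [hf]
    have h1 : HasDerivAt (fun x : ℝ => (a : ℝ) + (b : ℝ) * x ^ β + (c : ℝ) * x ^ γ)
        ((b : ℝ) * (β * x ^ (β - 1)) + (c : ℝ) * (γ * x ^ (γ - 1))) x := by
      exact (((hasDerivAt_pow β x).const_mul (b : ℝ)).const_add (a : ℝ)).add
        ((hasDerivAt_pow γ x).const_mul (c : ℝ))
    have : β - 1 = p := by omega
    rw [this] at h1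
    have : γ - 1 = p + r := by omega
    rw [this] at h1
    exact h1.deriv
  have hm'' : (b : ℝ) * (β * m ^ p) + (c : ℝ) * (γ * m ^ (p + r)) = 0 := by
    rw [← hderiv m]; exact hm'
  have hc_eq : (c : ℝ) * γ * m ^ (p + r) = -((b : ℝ) * β * m ^ p) := by
    linarith [hm'']
  -- the key bound : |deriv f x| ≤ |b| * β * m ^ p for x ∈ [0, m]
  have hmp : (0:ℝ) < m ^ p := pow_pos hm p
  have key : ∀ x ∈ Set.Icc (0:ℝ) m, |deriv f x| ≤ |(b:ℝ)| * β * m ^ p := by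
    intro x hx
    obtain ⟨hx0, hxm⟩ := hx
    obtain ⟨t, ht0, ht1, hxt⟩ : ∃ t : ℝ, 0 ≤ t ∧ t ≤ 1 ∧ x = t * m :=
      ⟨x / m, div_nonneg hx0 hm.le, (div_le_one hm).mpr hxm,
        (div_mul_cancel₀ x (ne_of_gt hm)).symm⟩
    subst hxt
    have hfact : deriv f (t * m) = (b : ℝ) * β * m ^ p * (t ^ p - t ^ (p + r)) := by
      rw [hderiv (t * m)]
      linear_combination (t ^ (p + r)) * hc_eq
    rw [hfact, abs_mul]
    have h1 : |(b : ℝ) * β * m ^ p| = |(b:ℝ)| * β * m ^ p := by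
      rw [abs_mul, abs_mul, abs_of_nonneg (by positivity : (0:ℝ) ≤ (β:ℝ)),
        abs_of_nonneg hmp.le]
    rw [h1]
    have h2 : |t ^ p - t ^ (p + r)| ≤ 1 := by
      have hle : t ^ (p + r) ≤ t ^ p := pow_le_pow_of_le_one ht0 ht1 (by omega)
      have hp1 : t ^ p ≤ 1 := pow_le_one₀ ht0 ht1
      have hpr0 : 0 ≤ t ^ (p + r) := pow_nonneg ht0 _
      rw [abs_le]; constructor <;> nlinarith
    calc |(b:ℝ)| * β * m ^ p * |t ^ p - t ^ (p + r)|
        ≤ |(b:ℝ)| * β * m ^ p * 1 := by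
          apply mul_le_mul_of_nonneg_left h2 (by positivity)
      _ = |(b:ℝ)| * β * m ^ p := by ring
  -- final bound : |b| * β * m ^ p ≤ b ^ 2 * β
  have final : |(b:ℝ)| * β * m ^ p ≤ (b:ℝ) ^ 2 * β := by
    rcases eq_or_ne b 0 with hb | hb
    · simp [hb]
    · have hb1 : (1:ℝ) ≤ |(b:ℝ)| := by
        rw [← Int.cast_abs]; exact_mod_cast Int.one_le_abs hb
      have hbne : (b:ℝ) ≠ 0 := Int.cast_ne_zero.mpr hb
      have hc0 : c ≠ 0 := by
        intro hc
        rw [hc] at hm''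
        have h0 : (b:ℝ) * ((β:ℝ) * m ^ p) = 0 := by push_cast at hm'' ⊢; linarith
        have : (b:ℝ) * ((β:ℝ) * m ^ p) ≠ 0 :=
          mul_ne_zero hbne (by positivity)
        exact this h0
      have hc1 : (1:ℝ) ≤ |(c:ℝ)| := by
        rw [← Int.cast_abs]; exact_mod_cast Int.one_le_abs hc0
      -- relation : γ * m ^ r ≤ |b| * β
      have habs : |(c:ℝ)| * γ * m ^ (p + r) = |(b:ℝ)| * β * m ^ p := by
        have := congrArg abs hc_eq
        rwa [abs_neg, abs_mul, abs_mul, abs_mul, abs_mul,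
          abs_of_nonneg (by positivity : (0:ℝ) ≤ (γ:ℝ)),
          abs_of_nonneg (by positivity : (0:ℝ) ≤ (β:ℝ)),
          abs_of_nonneg (pow_nonneg hm.le _), abs_of_nonneg hmp.le] at this
      have hrel : (γ:ℝ) * m ^ r ≤ |(b:ℝ)| * β := by
        rw [pow_add] at habs
        have hγ1 : (1:ℝ) ≤ (γ:ℝ) := by exact_mod_cast (by omega : 1 ≤ γ)
        have h := habs
        have hmr : (0:ℝ) < m ^ r := pow_pos hm r
        nlinarith [mul_pos (mul_pos (Nat.cast_pos.mpr (by omega : 0 < γ)) hmp) hmr]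
      have hsq : |(b:ℝ)| ^ 2 = (b:ℝ) ^ 2 := sq_abs _
      have hβpos : (0:ℝ) < (β:ℝ) := by exact_mod_cast hβ
      have hbβ : (0:ℝ) ≤ |(b:ℝ)| * β := by positivity
      rcases le_or_gt m 1 with hm1 | hm1
      · have hmp1 : m ^ p ≤ 1 := pow_le_one₀ hm.le hm1
        have habs2 : |(b:ℝ)| ≤ |(b:ℝ)| ^ 2 := by nlinarith
        calc |(b:ℝ)| * β * m ^ p ≤ |(b:ℝ)| * β * 1 :=
              mul_le_mul_of_nonneg_left hmp1 hbβ
          _ = |(b:ℝ)| * β := mul_one _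
          _ ≤ |(b:ℝ)| ^ 2 * β := mul_le_mul_of_nonneg_right habs2 hβpos.le
          _ = (b:ℝ) ^ 2 * β := by rw [hsq]
      · have hmpr : m ^ p ≤ m ^ r := pow_le_pow_right₀ hm1.le (by omega)
        have hβγ' : (β:ℝ) ≤ (γ:ℝ) := by exact_mod_cast (by omega : β ≤ γ)
        have hγpos : (0:ℝ) < (γ:ℝ) := by exact_mod_cast (by omega : 0 < γ)
        have step : (γ:ℝ) * (|(b:ℝ)| * β * m ^ p) ≤ (γ:ℝ) * ((b:ℝ) ^ 2 * β) := by
          calc (γ:ℝ) * (|(b:ℝ)| * β * m ^ p)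
              = |(b:ℝ)| * β * ((γ:ℝ) * m ^ p) := by ring
            _ ≤ |(b:ℝ)| * β * ((γ:ℝ) * m ^ r) :=
                mul_le_mul_of_nonneg_left (mul_le_mul_of_nonneg_left hmpr hγpos.le) hbβ
            _ ≤ |(b:ℝ)| * β * (|(b:ℝ)| * β) := mul_le_mul_of_nonneg_left hrel hbβ
            _ = |(b:ℝ)| ^ 2 * β * β := by ring
            _ = (b:ℝ) ^ 2 * β * β := by rw [hsq]
            _ ≤ (b:ℝ) ^ 2 * β * γ := mul_le_mul_of_nonneg_left hβγ' (by positivity)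
            _ = (γ:ℝ) * ((b:ℝ) ^ 2 * β) := by ring
        exact le_of_mul_le_mul_left step hγpos
  apply Real.sSup_le
  · rintro y ⟨x, hx, rfl⟩
    exact le_trans (key x hx) final
  · positivity
end

section
/- Let f(x) = a + b·x^β + c·x^γ be a polynomial with integer coefficients where a > 0, c > 0, b is a nonzero integer, and 1 ≤ β < γ are natural numbers. Then f has exactly two distinct positive real roots if and only if b < 0 and (a·γ)^{γ−β}·(c·γ)^{β} < |b·β|^{β}·|b·(γ−β)|^{γ−β}. -/
/-- Analytic core: criterion for `A - B x^β + C x^(β+δ)` (all of `A,B,C` positive)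
to have exactly two distinct positive real roots. -/
theorem trinomial_aux (A B C : ℝ) (β δ : ℕ) (hA : 0 < A) (hB : 0 < B) (hC : 0 < C)
    (hβ : 1 ≤ β) (hδ : 1 ≤ δ) :
    {x : ℝ | 0 < x ∧ A - B * x ^ β + C * x ^ (β + δ) = 0}.ncard = 2 ↔
      (A * (β + δ)) ^ δ * (C * (β + δ)) ^ β < (B * β) ^ β * (B * δ) ^ δ := by
  have hβ0 : (0:ℝ) < β := by exact_mod_cast hβ
  have hδ0 : (0:ℝ) < δ := by exact_mod_cast hδ
  have hδne : δ ≠ 0 := by omega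
  have hγ0 : (0:ℝ) < (β:ℝ) + δ := by positivity
  set f : ℝ → ℝ := fun x => A - B * x ^ β + C * x ^ (β + δ) with hf
  set K : ℝ := β * B / ((β + δ) * C) with hKdef
  have hK : 0 < K := by positivity
  set x0 : ℝ := K ^ ((δ:ℝ)⁻¹) with hx0def
  have hx0 : 0 < x0 := Real.rpow_pos_of_pos hK _
  have hx0δ : x0 ^ δ = K := by
    rw [hx0def, ← Real.rpow_natCast (K ^ ((δ:ℝ)⁻¹)) δ, ← Real.rpow_mul hK.le,
      inv_mul_cancel₀ (by positivity), Real.rpow_one]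
  have hcont : Continuous f := by
    apply Continuous.add
    · exact continuous_const.sub (continuous_const.mul (continuous_pow β))
    · exact continuous_const.mul (continuous_pow (β + δ))
  -- derivative
  have hderiv : ∀ x : ℝ, HasDerivAt f (x ^ (β - 1) * (((β:ℝ) + δ) * C * x ^ δ - β * B)) x := by
    intro x
    have h1 : HasDerivAt f
        (-(B * (β * x ^ (β - 1))) + C * (((β + δ : ℕ) : ℝ) * x ^ (β + δ - 1))) x :=
      (((hasDerivAt_pow β x).const_mul B).const_sub A).add
        ((hasDerivAt_pow (β + δ) x).const_mul C)
    convert h1 using 1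
    have h2 : β + δ - 1 = (β - 1) + δ := by omega
    rw [h2, pow_add]
    push_cast
    ring
  have hanti : StrictAntiOn f (Set.Icc 0 x0) := by
    apply strictAntiOn_of_deriv_neg (convex_Icc _ _) hcont.continuousOn
    intro x hx
    rw [interior_Icc] at hx
    rw [(hderiv x).deriv]
    have hxp : 0 < x := hx.1
    have hlt : x ^ δ < K := by
      rw [← hx0δ]; exact pow_lt_pow_left₀ hx.2 hxp.le hδne
    apply mul_neg_of_pos_of_neg (pow_pos hxp _)
    have h7 : ((β:ℝ) + δ) * C * x ^ δ < ((β:ℝ) + δ) * C * K :=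
      mul_lt_mul_of_pos_left hlt (by positivity)
    have hKeq : ((β:ℝ) + δ) * C * K = β * B := by
      rw [hKdef]; field_simp
    linarith
  have hmono : StrictMonoOn f (Set.Ici x0) := by
    apply strictMonoOn_of_deriv_pos (convex_Ici _) hcont.continuousOn
    intro x hx
    rw [interior_Ici] at hx
    rw [(hderiv x).deriv]
    have hxp : 0 < x := hx0.trans hx
    have hlt : K < x ^ δ := by
      rw [← hx0δ]; exact pow_lt_pow_left₀ hx hx0.le hδne
    apply mul_pos (pow_pos hxp _)
    have h7 : ((β:ℝ) + δ) * C * K < ((β:ℝ) + δ) * C * x ^ δ :=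
      mul_lt_mul_of_pos_left hlt (by positivity)
    have hKeq : ((β:ℝ) + δ) * C * K = β * B := by
      rw [hKdef]; field_simp
    linarith
  -- the value at the critical point
  have hfx0 : f x0 = A - B * δ / ((β:ℝ) + δ) * x0 ^ β := by
    have : x0 ^ (β + δ) = x0 ^ β * K := by rw [pow_add, hx0δ]
    rw [hf]
    simp only
    rw [this, hKdef]
    field_simp
    ring
  -- key translation of the inequality
  have hkey : f x0 < 0 ↔
      (A * (β + δ)) ^ δ * (C * (β + δ)) ^ β < (B * β) ^ β * (B * δ) ^ δ := by
    rw [hfx0]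
    have h1 : A - B * δ / ((β:ℝ) + δ) * x0 ^ β < 0 ↔ A * ((β:ℝ) + δ) < B * δ * x0 ^ β := by
      rw [sub_neg, div_mul_eq_mul_div, lt_div_iff₀ hγ0]
    rw [h1, ← pow_lt_pow_iff_left₀ (by positivity) (by positivity : (0:ℝ) ≤ B * δ * x0 ^ β) hδne,
      ← mul_lt_mul_iff_of_pos_right (by positivity : (0:ℝ) < (C * ((β:ℝ) + δ)) ^ β)]
    have h2 : (B * δ * x0 ^ β) ^ δ * (C * ((β:ℝ) + δ)) ^ β = (B * β) ^ β * (B * δ) ^ δ := by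
      have h3 : (x0 ^ β) ^ δ = K ^ β := by rw [← pow_mul, mul_comm β δ, pow_mul, hx0δ]
      have h4 : K * (C * ((β:ℝ) + δ)) = B * β := by rw [hKdef]; field_simp
      calc (B * δ * x0 ^ β) ^ δ * (C * ((β:ℝ) + δ)) ^ β
          = (B * (δ:ℝ)) ^ δ * ((x0 ^ β) ^ δ * (C * ((β:ℝ) + δ)) ^ β) := by
            rw [mul_pow]; ring
        _ = (B * (δ:ℝ)) ^ δ * (K * (C * ((β:ℝ) + δ))) ^ β := by rw [h3, ← mul_pow]
        _ = (B * β) ^ β * (B * δ) ^ δ := by rw [h4]; ring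
    rw [h2]
  rw [← hkey]
  -- now: ncard = 2 ↔ f x0 < 0
  constructor
  · -- if not f x0 < 0, at most one root
    intro hcard
    by_contra hge
    push_neg at hge
    have hsub : {x : ℝ | 0 < x ∧ A - B * x ^ β + C * x ^ (β + δ) = 0} ⊆ {x0} := by
      intro x hx
      obtain ⟨hxp, hxr⟩ := hx
      have hfx : f x = 0 := hxr
      by_contra hne
      rcases lt_or_gt_of_ne hne with hlt | hgt
      · have := hanti ⟨hxp.le, hlt.le⟩ ⟨hxp.le.trans hlt.le, le_refl _⟩ hlt
        -- f x0 < f x = 0, so f x > f x0 ≥ 0 contradiction with f x = 0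
        rw [hfx] at this
        linarith
      · have := hmono (Set.self_mem_Ici) (le_of_lt hgt) hgt
        rw [hfx] at this
        linarith
    have : {x : ℝ | 0 < x ∧ A - B * x ^ β + C * x ^ (β + δ) = 0}.ncard ≤ ({x0} : Set ℝ).ncard :=
      Set.ncard_le_ncard hsub (Set.finite_singleton x0)
    rw [Set.ncard_singleton, hcard] at this
    omega
  · intro hneg
    -- f 0 = A > 0
    have hf0 : f 0 = A := by
      rw [hf]; simp [zero_pow (by omega : β ≠ 0), zero_pow (by omega : β + δ ≠ 0)]
    -- root in (0, x0)
    obtain ⟨r, hrmem, hfr⟩ : ∃ r ∈ Set.Ioo (0:ℝ) x0, f r = 0 := by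
      have := intermediate_value_Ioo' hx0.le hcont.continuousOn
        (show (0:ℝ) ∈ Set.Ioo (f x0) (f 0) by rw [hf0]; exact ⟨hneg, hA⟩)
      obtain ⟨r, hr, hr0⟩ := this
      exact ⟨r, hr, hr0⟩
    -- large point where f is positive
    set M : ℝ := max (x0 + 1) (B / C + 1) with hMdef
    have hx0M : x0 < M := lt_of_lt_of_le (by linarith) (le_max_left _ _)
    have hM1 : 1 ≤ M := le_trans (by linarith) (le_max_left _ _)
    have hMBC : B / C < M := lt_of_lt_of_le (by linarith) (le_max_right _ _)
    have hMpos : 0 < M := by linarith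
    have hfM : 0 < f M := by
      have hMδ : M ≤ M ^ δ := le_self_pow₀ hM1 hδne
      have hCB : B < C * M := by rwa [div_lt_iff₀ hC, mul_comm] at hMBC
      have h5 : B < C * M ^ δ := lt_of_lt_of_le hCB (by nlinarith)
      have h6 : f M = A + M ^ β * (C * M ^ δ - B) := by rw [hf]; simp only; rw [pow_add]; ring
      rw [h6]
      have : 0 < M ^ β * (C * M ^ δ - B) := mul_pos (pow_pos hMpos _) (by linarith)
      linarith
    obtain ⟨s, hsmem, hfs⟩ : ∃ s ∈ Set.Ioo x0 M, f s = 0 := by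
      have := intermediate_value_Ioo hx0M.le hcont.continuousOn
        (show (0:ℝ) ∈ Set.Ioo (f x0) (f M) from ⟨hneg, hfM⟩)
      obtain ⟨s, hs, hs0⟩ := this
      exact ⟨s, hs, hs0⟩
    have hrs : r ≠ s := ne_of_lt (hrmem.2.trans hsmem.1)
    have hSeq : {x : ℝ | 0 < x ∧ A - B * x ^ β + C * x ^ (β + δ) = 0} = {r, s} := by
      ext x
      constructor
      · rintro ⟨hxp, hxr⟩
        have hfx : f x = 0 := hxr
        rcases le_total x x0 with hle | hge
        · left
          exact hanti.injOn ⟨hxp.le, hle⟩ ⟨hrmem.1.le, hrmem.2.le⟩ (by rw [hfx, hfr])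
        · right
          exact hmono.injOn hge hsmem.1.le (by rw [hfx, hfs])
      · rintro (rfl | rfl)
        · exact ⟨hrmem.1, hfr⟩
        · exact ⟨hx0.trans hsmem.1, hfs⟩
    rw [hSeq, Set.ncard_pair hrs]

/-- Criterion (from Section 3 of the paper) for a trinomial with positive
extreme coefficients to have exactly two distinct positive real roots. -/
theorem trinomial_two_positive_roots_iff (a b c : ℤ) (β γ : ℕ)
    (ha : 0 < a) (hb : b ≠ 0) (hc : 0 < c) (hβ : 1 ≤ β) (hβγ : β < γ) :
    {x : ℝ | 0 < x ∧ (a : ℝ) + (b : ℝ) * x ^ β + (c : ℝ) * x ^ γ = 0}.ncard = 2 ↔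
      (b < 0 ∧
        (a * (γ : ℤ)) ^ (γ - β) * (c * (γ : ℤ)) ^ β <
          |b * (β : ℤ)| ^ β * |b * ((γ : ℤ) - (β : ℤ))| ^ (γ - β)) := by
  rcases hb.lt_or_gt with hbneg | hbpos
  · -- case b < 0
    set δ : ℕ := γ - β with hδdef
    have hγeq : γ = β + δ := by omega
    have hδ1 : 1 ≤ δ := by omega
    have hseteq : {x : ℝ | 0 < x ∧ (a : ℝ) + (b : ℝ) * x ^ β + (c : ℝ) * x ^ γ = 0}
        = {x : ℝ | 0 < x ∧ (a:ℝ) - (-(b:ℝ)) * x ^ β + (c:ℝ) * x ^ (β + δ) = 0} := by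
      ext x; rw [hγeq]; constructor <;> rintro ⟨h1, h2⟩ <;> exact ⟨h1, by linarith⟩
    rw [hseteq, trinomial_aux (a:ℝ) (-(b:ℝ)) (c:ℝ) β δ (by exact_mod_cast ha)
      (by exact_mod_cast neg_pos.mpr hbneg) (by exact_mod_cast hc) hβ hδ1]
    have habs1 : |b * (β : ℤ)| = (-b) * β := by
      rw [abs_of_nonpos (mul_nonpos_of_nonpos_of_nonneg hbneg.le (Int.ofNat_nonneg β))]
      ring
    have habs2 : |b * ((γ : ℤ) - (β : ℤ))| = (-b) * δ := by
      have h8 : (γ : ℤ) - (β : ℤ) = (δ : ℤ) := by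
        have : (γ : ℤ) = ((β + δ : ℕ) : ℤ) := by exact_mod_cast congrArg (Nat.cast : ℕ → ℤ) hγeq
        push_cast [this]; ring
      rw [h8, abs_of_nonpos (mul_nonpos_of_nonpos_of_nonneg hbneg.le (Int.ofNat_nonneg δ))]
      ring
    rw [and_iff_right hbneg, habs1, habs2]
    have hγcast : (γ : ℤ) = (β : ℤ) + (δ : ℤ) := by exact_mod_cast congrArg (Nat.cast : ℕ → ℤ) hγeq
    rw [hγcast]
    constructor
    · intro h
      exact_mod_cast h
    · intro h
      exact_mod_cast h
  · -- case b > 0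
    have hempty : {x : ℝ | 0 < x ∧ (a : ℝ) + (b : ℝ) * x ^ β + (c : ℝ) * x ^ γ = 0} = ∅ := by
      ext x
      simp only [Set.mem_setOf_eq, Set.mem_empty_iff_false, iff_false, not_and]
      intro hxp
      have hb' : (0:ℝ) < b := by exact_mod_cast hbpos
      have ha' : (0:ℝ) < a := by exact_mod_cast ha
      have hc' : (0:ℝ) < c := by exact_mod_cast hc
      have := pow_pos hxp β
      have := pow_pos hxp γ
      nlinarith
    rw [hempty, Set.ncard_empty]
    exact iff_of_false (by omega) (fun h => absurd h.1 (by omega))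
end

section
/- Let f(x) = a + b·x^β + c·x^γ be a polynomial with nonzero integer coefficients a, b, c and natural number exponents 1 ≤ β < γ. If a and c have opposite signs (i.e., a·c < 0), then f has exactly one positive real root. -/
private lemma trinomial_key (A B C : ℝ) (hA : 0 < A) (hC : C < 0) (β δ : ℕ)
    (hβ : 1 ≤ β) (hδ : 1 ≤ δ) :
    ∃! x : ℝ, 0 < x ∧ A + B * x ^ β + C * x ^ (β + δ) = 0 := by
  set M : ℝ := max 1 ((A + |B| + 1) / (-C)) with hMdef
  have hM1 : (1:ℝ) ≤ M := le_max_left _ _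
  have hM0 : (0:ℝ) < M := lt_of_lt_of_le one_pos hM1
  have hCpos : (0:ℝ) < -C := by linarith
  have hM2 : A + |B| + 1 ≤ -C * M := by
    have h := le_max_right 1 ((A + |B| + 1) / (-C))
    calc A + |B| + 1 = (A + |B| + 1) / (-C) * (-C) :=
        (div_mul_cancel₀ _ (ne_of_gt hCpos)).symm
    _ ≤ M * (-C) := mul_le_mul_of_nonneg_right h (le_of_lt hCpos)
    _ = -C * M := by ring
  have hMβ : (1:ℝ) ≤ M ^ β := one_le_pow₀ hM1
  have hMδ : M ≤ M ^ δ := le_self_pow₀ hM1 (by omega)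
  -- value at M is negative
  have hfM : A + B * M ^ β + C * M ^ (β + δ) < 0 := by
    have hBle : B * M ^ β ≤ |B| * M ^ β :=
      mul_le_mul_of_nonneg_right (le_abs_self B) (pow_nonneg hM0.le β)
    have hpow : M ^ (β + δ) = M ^ β * M ^ δ := pow_add M β δ
    have h3 : C * M ^ (β + δ) ≤ C * (M ^ β * M) := by
      rw [hpow]
      apply mul_le_mul_of_nonpos_left _ hC.le
      exact mul_le_mul_of_nonneg_left hMδ (pow_nonneg hM0.le β)
    have h4 : A ≤ A * M ^ β := le_mul_of_one_le_right hA.le hMβ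
    have h5 : A + |B| + C * M ≤ -1 := by nlinarith
    nlinarith [pow_pos hM0 β, mul_le_mul_of_nonneg_left h5 (pow_pos hM0 β).le]
  -- existence via IVT
  have hcont : ContinuousOn (fun x : ℝ => A + B * x ^ β + C * x ^ (β + δ)) (Set.Icc 0 M) :=
    Continuous.continuousOn (by fun_prop)
  have hf0 : (fun x : ℝ => A + B * x ^ β + C * x ^ (β + δ)) 0 = A := by
    simp [zero_pow (by omega : β ≠ 0), zero_pow (by omega : β + δ ≠ 0)]
  have hsub := intermediate_value_Ioo' (le_of_lt hM0) hcont
  have h0mem : (0:ℝ) ∈ Set.Ioo ((fun x : ℝ => A + B * x ^ β + C * x ^ (β + δ)) M)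
      ((fun x : ℝ => A + B * x ^ β + C * x ^ (β + δ)) 0) := by
    constructor
    · exact hfM
    · rw [hf0]; exact hA
  obtain ⟨x, hxmem, hfx⟩ := hsub h0mem
  -- uniqueness core
  have uni : ∀ u v : ℝ, 0 < u → 0 < v → u < v →
      A + B * u ^ β + C * u ^ (β + δ) = 0 →
      A + B * v ^ β + C * v ^ (β + δ) = 0 → False := by
    intro u v hu hv huv h1 h2
    have huβ : u ^ β < v ^ β := pow_lt_pow_left₀ huv hu.le (by omega)
    have huδ : u ^ δ < v ^ δ := pow_lt_pow_left₀ huv hu.le (by omega)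
    rw [pow_add] at h1 h2
    have key : A * (v ^ β - u ^ β) + C * (u ^ β * v ^ β) * (u ^ δ - v ^ δ) = 0 := by
      linear_combination v ^ β * h1 - u ^ β * h2
    nlinarith [mul_pos hA (sub_pos.2 huβ),
      mul_pos (mul_pos (neg_pos.2 hC) (mul_pos (pow_pos hu β) (pow_pos hv β)))
        (sub_pos.2 huδ)]
  refine ⟨x, ⟨hxmem.1, hfx⟩, ?_⟩
  intro y ⟨hy0, hfy⟩
  rcases lt_trichotomy y x with h | h | h
  · exact (uni y x hy0 hxmem.1 h hfy hfx).elim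
  · exact h
  · exact (uni x y hxmem.1 hy0 h hfx hfy).elim

/-- A trinomial whose extreme coefficients have opposite signs has exactly one
positive real root (Section 3 of the paper). -/
theorem trinomial_one_positive_root (a b c : ℤ) (β γ : ℕ)
    (ha : a ≠ 0) (hb : b ≠ 0) (hc : c ≠ 0) (hac : a * c < 0)
    (hβ : 1 ≤ β) (hβγ : β < γ) :
    ∃! x : ℝ, 0 < x ∧ (a : ℝ) + (b : ℝ) * x ^ β + (c : ℝ) * x ^ γ = 0 := by
  obtain ⟨δ, rfl⟩ : ∃ δ, γ = β + δ := ⟨γ - β, by omega⟩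
  have hδ : 1 ≤ δ := by omega
  rcases mul_neg_iff.1 hac with ⟨ha', hc'⟩ | ⟨ha', hc'⟩
  · exact trinomial_key (a : ℝ) (b : ℝ) (c : ℝ) (by exact_mod_cast ha')
      (by exact_mod_cast hc') β δ hβ hδ
  · obtain ⟨x, ⟨hx0, hfx⟩, hux⟩ := trinomial_key (-(a : ℝ)) (-(b : ℝ)) (-(c : ℝ))
      (by push_cast; linarith [(show (a:ℝ) < 0 by exact_mod_cast ha')])
      (by push_cast; linarith [(show (0:ℝ) < c by exact_mod_cast hc')]) β δ hβ hδ
    refine ⟨x, ⟨hx0, by linarith⟩, ?_⟩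
    intro y ⟨hy0, hfy⟩
    exact hux y ⟨hy0, by linarith⟩
end

section
/- Let f(x) = a·x^α + b·x^β + c·x^γ be a polynomial with integer coefficients a, b, c and natural number exponents α < β < γ, where f is not identically zero. Then f has at most two positive real roots. -/
open Polynomial

private lemma key_ordered (A B C : ℝ) (m n : ℕ) (hm : 0 < m) (hmn : m < n)
    (x y z : ℝ) (hx : 0 < x) (hxy : x < y) (hyz : y < z)
    (h1 : A + B * x ^ m + C * x ^ n = 0)
    (h2 : A + B * y ^ m + C * y ^ n = 0)
    (h3 : A + B * z ^ m + C * z ^ n = 0) :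
    A = 0 ∧ B = 0 ∧ C = 0 := by
  set g : ℝ → ℝ := fun t => A + B * t ^ m + C * t ^ n with hg
  set g' : ℝ → ℝ := fun t => B * (m * t ^ (m - 1)) + C * (n * t ^ (n - 1)) with hg'
  have hderiv : ∀ t : ℝ, HasDerivAt g (g' t) t := by
    intro t
    have := ((hasDerivAt_pow m t).const_mul B)
    exact (((hasDerivAt_const t A).add ((hasDerivAt_pow m t).const_mul B)).add
      ((hasDerivAt_pow n t).const_mul C)).congr_deriv (by simp [hg'])
  have hcont : Continuous g := by fun_prop
  obtain ⟨u, hu, hu0⟩ := exists_hasDerivAt_eq_zero hxy hcont.continuousOn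
    (h1.trans h2.symm) (fun t _ => hderiv t)
  obtain ⟨v, hv, hv0⟩ := exists_hasDerivAt_eq_zero hyz hcont.continuousOn
    (h2.trans h3.symm) (fun t _ => hderiv t)
  have hupos : 0 < u := hx.trans hu.1
  have hvpos : 0 < v := hx.trans (hxy.trans hv.1)
  have huv : u < v := hu.2.trans hv.1
  -- reduce: B*m + C*n*t^(n-m) = 0 for t = u, v
  have reduce : ∀ t : ℝ, 0 < t → g' t = 0 → B * m + C * n * t ^ (n - m) = 0 := by
    intro t ht h0
    have hpow : t ^ (n - m) * t ^ (m - 1) = t ^ (n - 1) := by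
      rw [← pow_add]; congr 1; omega
    have : (B * m + C * n * t ^ (n - m)) * t ^ (m - 1) = 0 := by
      rw [hg'] at h0
      calc (B * m + C * n * t ^ (n - m)) * t ^ (m - 1)
          = B * (m * t ^ (m-1)) + C * n * (t ^ (n-m) * t ^ (m-1)) := by ring
        _ = B * (m * t ^ (m-1)) + C * (n * t ^ (n-1)) := by rw [hpow]; ring
        _ = 0 := h0
    exact (mul_eq_zero.1 this).resolve_right (pow_ne_zero _ ht.ne')
  have eu := reduce u hupos hu0
  have ev := reduce v hvpos hv0
  have hC : C = 0 := by
    have hne : u ^ (n - m) < v ^ (n - m) :=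
      pow_lt_pow_left₀ huv hupos.le (by omega)
    have : C * n * (v ^ (n - m) - u ^ (n - m)) = 0 := by linarith
    have h1 := mul_eq_zero.1 this
    rcases h1 with h1 | h1
    · rcases mul_eq_zero.1 h1 with h | h
      · exact h
      · exact absurd h (Nat.cast_ne_zero.2 (by omega))
    · linarith
  have hB : B = 0 := by
    have : B * m = 0 := by rw [hC] at eu; linarith
    rcases mul_eq_zero.1 this with h | h
    · exact h
    · exact absurd h (Nat.cast_ne_zero.2 (by omega))
  refine ⟨?_, hB, hC⟩
  rw [hB, hC] at h1; linarith

private lemma key_any (A B C : ℝ) (m n : ℕ) (hm : 0 < m) (hmn : m < n)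
    (x y z : ℝ) (hx : 0 < x) (hy : 0 < y) (hz : 0 < z)
    (hxy : x ≠ y) (hxz : x ≠ z) (hyz : y ≠ z)
    (h1 : A + B * x ^ m + C * x ^ n = 0)
    (h2 : A + B * y ^ m + C * y ^ n = 0)
    (h3 : A + B * z ^ m + C * z ^ n = 0) :
    A = 0 ∧ B = 0 ∧ C = 0 := by
  rcases hxy.lt_or_gt with h | h <;> rcases hxz.lt_or_gt with h' | h' <;>
    rcases hyz.lt_or_gt with h'' | h''
  · exact key_ordered A B C m n hm hmn x y z hx h h'' h1 h2 h3
  · exact key_ordered A B C m n hm hmn x z y hx h' h'' h1 h3 h2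
  · exact absurd (h'.trans (h.trans h'')) (lt_irrefl z)
  · exact key_ordered A B C m n hm hmn z x y hz h' h h3 h1 h2
  · exact key_ordered A B C m n hm hmn y x z hy h h' h2 h1 h3
  · exact absurd (h.trans (h'.trans h'')) (lt_irrefl y)
  · exact key_ordered A B C m n hm hmn y z x hy h'' h' h2 h3 h1
  · exact key_ordered A B C m n hm hmn z y x hz h'' h h3 h2 h1

/-- Descartes' rule of signs for trinomials: a nonzero trinomial has at most
two positive real roots. -/
theorem trinomial_at_most_two_positive_roots (a b c : ℤ) (α β γ : ℕ)
    (hαβ : α < β) (hβγ : β < γ)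
    (f : Polynomial ℤ)
    (hf : f = Polynomial.C a * Polynomial.X ^ α + Polynomial.C b * Polynomial.X ^ β
        + Polynomial.C c * Polynomial.X ^ γ)
    (hf0 : f ≠ 0) :
    ∀ x y z : ℝ, 0 < x → 0 < y → 0 < z →
      Polynomial.aeval x f = 0 → Polynomial.aeval y f = 0 → Polynomial.aeval z f = 0 →
      x = y ∨ x = z ∨ y = z := by
  intro x y z hx hy hz hfx hfy hfz
  by_contra hcon
  push_neg at hcon
  obtain ⟨hxy, hxz, hyz⟩ := hcon
  set m := β - α with hm
  set n := γ - α with hn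
  have hm0 : 0 < m := by omega
  have hmn : m < n := by omega
  have ev : ∀ t : ℝ, 0 < t → Polynomial.aeval t f = 0 →
      (a : ℝ) + b * t ^ m + c * t ^ n = 0 := by
    intro t ht h0
    rw [hf] at h0
    simp only [map_add, map_mul, map_pow, Polynomial.aeval_C, Polynomial.aeval_X] at h0
    have key : t ^ α * ((a : ℝ) + b * t ^ m + c * t ^ n) = 0 := by
      have e1 : t ^ α * t ^ m = t ^ β := by rw [← pow_add]; congr 1; omega
      have e2 : t ^ α * t ^ n = t ^ γ := by rw [← pow_add]; congr 1; omega
      calc t ^ α * ((a : ℝ) + b * t ^ m + c * t ^ n)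
          = a * t ^ α + b * (t ^ α * t ^ m) + c * (t ^ α * t ^ n) := by ring
        _ = a * t ^ α + b * t ^ β + c * t ^ γ := by rw [e1, e2]
        _ = 0 := h0
    exact (mul_eq_zero.1 key).resolve_left (pow_ne_zero _ ht.ne')
  obtain ⟨hA, hB, hC⟩ := key_any (a : ℝ) (b : ℝ) (c : ℝ) m n hm0 hmn x y z hx hy hz
    hxy hxz hyz (ev x hx hfx) (ev y hy hfy) (ev z hz hfz)
  have ha : a = 0 := by exact_mod_cast hA
  have hb : b = 0 := by exact_mod_cast hB
  have hc : c = 0 := by exact_mod_cast hC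
  apply hf0
  rw [hf, ha, hb, hc]
  simp
end
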